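/- Let u_{j+1} minimize ‖u‖_B + λ_{j+1}‖r_j − Tu‖_{L^p}^p recursively with r_0 = f ∈ L^p_#, λ_{j+1} = λ₁·2^{(p−1)j} and λ₁ = β/‖f‖_{L^p}^{p−1}, under the apriori dual estimate ‖r_j‖_{L^p}^{p−1} ≤ (β/p)·‖T*φ(r_j)‖_{B*} = β/(p λ_j). Then the partial sums x_k = Σ_{j=1}^k u_j form a Cauchy sequence in B with limit x satisfying ‖x‖_B ≤ (β 2^p / p)·‖f‖_{L^p}. -/

import Mathlib

open MeasureTheory Finset Filter

lemma aux_two_rpow_ge (p : ℝ) (hp : 2 ≤ p) : p^2 - p ≤ (2:ℝ) ^ p := by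
  have hlog2 : (0.6931471803:ℝ) < Real.log 2 := Real.log_two_gt_d9
  have hq : (0:ℝ) ≤ p - 2 := by linarith
  have hx0 : (0:ℝ) ≤ (p-2) * Real.log 2 := mul_nonneg hq (by linarith)
  set x := (p-2) * Real.log 2 with hxdef
  have hxq : (p-2) * 0.6931471803 ≤ x := by
    apply mul_le_mul_of_nonneg_left (le_of_lt hlog2) hq
  have h4 := Real.sum_le_exp_of_nonneg hx0 4
  have hsum : (1:ℝ) + x + x^2/2 + x^3/6 ≤ Real.exp x := by
    have : ∑ i ∈ Finset.range 4, x ^ i / (i.factorial : ℝ) = 1 + x + x^2/2 + x^3/6 := by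
      simp [Finset.sum_range_succ, Nat.factorial]
    linarith [h4, this.symm.le, this.le]
  have hE : (2:ℝ)^p = 4 * Real.exp x := by
    rw [Real.rpow_def_of_pos (by norm_num : (0:ℝ) < 2)]
    rw [show Real.log 2 * p = (Real.log 2 + Real.log 2) + (p-2)*Real.log 2 by ring,
       Real.exp_add, Real.exp_add, Real.exp_log (by norm_num : (0:ℝ) < 2)]
    norm_num
    exact hxdef.symm
  rw [hE]
  have hexp : 4 * (1 + x + x^2/2 + x^3/6) ≤ 4 * Real.exp x := by linarith
  have hpoly : p^2 - p ≤ 4 * (1 + x + x^2/2 + x^3/6) := by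
    nlinarith [sq_nonneg x, sq_nonneg (x-2), mul_nonneg hx0 (sq_nonneg (x-2)), sq_nonneg (p-2),
      mul_nonneg hq hq, mul_le_mul hxq hxq (by nlinarith) hx0, hx0,
      mul_nonneg (mul_nonneg hx0 hx0) hx0]
  linarith

lemma aux_star (p : ℝ) (hp : 1 < p) :
    p + ((2:ℝ)^p - 2) * p ^ (-(1/(p-1))) ≤ (2:ℝ)^p := by
  have hp0 : (0:ℝ) < p := by linarith
  have hp1 : (0:ℝ) < p - 1 := by linarith
  set t := p ^ (-(1/(p-1))) with ht
  have ht0 : 0 < t := Real.rpow_pos_of_pos hp0 _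
  have ht1 : t ≤ 1 := Real.rpow_le_one_of_one_le_of_nonpos (by linarith)
    (neg_nonpos.mpr (by positivity))
  have hE2 : (2:ℝ) ≤ 2^p := by
    calc (2:ℝ) = 2^(1:ℝ) := (Real.rpow_one 2).symm
    _ ≤ 2^p := (Real.rpow_le_rpow_left_iff (by norm_num)).mpr (le_of_lt hp)
  rcases le_total p 2 with h2 | h2
  · nlinarith [mul_le_mul_of_nonneg_left ht1 (by linarith : (0:ℝ) ≤ 2^p - 2)]
  · set E := (2:ℝ)^p with hEdef
    have hE : p^2 - p ≤ E := aux_two_rpow_ge p h2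
    set L := Real.log p with hLdef
    have hLlb : 1 - p⁻¹ ≤ L := by
      have h := Real.log_le_sub_one_of_pos (show (0:ℝ) < p⁻¹ by positivity)
      rw [Real.log_inv] at h
      linarith
    have hLp : p - 1 ≤ L * p := by
      have := mul_le_mul_of_nonneg_right hLlb (le_of_lt hp0)
      have hinv : p⁻¹ * p = 1 := inv_mul_cancel₀ (ne_of_gt hp0)
      nlinarith
    have hL0 : 0 < L := by
      have : (0:ℝ) < 1 - p⁻¹ := by
        have : p⁻¹ < 1 := by
          rw [inv_lt_one_iff₀]; right; linarith
        linarith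
      linarith
    have htexp : t = Real.exp (-(L/(p-1))) := by
      rw [ht, Real.rpow_def_of_pos hp0]
      congr 1
      field_simp
      rw [hLdef]
    have h1 : t * ((p-1) + L) ≤ (p-1) := by
      have hexp := Real.add_one_le_exp (L/(p-1))
      have hmul : t * (L/(p-1) + 1) ≤ t * Real.exp (L/(p-1)) :=
        mul_le_mul_of_nonneg_left hexp ht0.le
      have hone : t * Real.exp (L/(p-1)) = 1 := by
        rw [htexp, ← Real.exp_add]; norm_num
      rw [hone] at hmul
      have := mul_le_mul_of_nonneg_right hmul (le_of_lt hp1)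
      have hid : (L/(p-1)+1)*(p-1) = (p-1)+L := by field_simp; ring
      calc t * ((p-1)+L) = t * ((L/(p-1)+1)*(p-1)) := by rw [hid]
        _ = t * (L/(p-1)+1) * (p-1) := by ring
        _ ≤ 1 * (p-1) := this
        _ = p - 1 := by ring
    have hEp : p ≤ E := by nlinarith
    have hPL : 0 < (p-1) + L := by linarith
    have step1 : (E-2) * (t * ((p-1)+L)) ≤ (E-2)*(p-1) :=
      mul_le_mul_of_nonneg_left h1 (by linarith)
    have step2 : (E-2)*(p-1)*p ≤ (E-p)*((p-1)+L)*p := by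
      nlinarith [mul_le_mul_of_nonneg_left hLp (by linarith : (0:ℝ) ≤ E - p),
        mul_nonneg (by linarith : (0:ℝ) ≤ p-1) (by nlinarith : (0:ℝ) ≤ E - (p^2 - p))]
    have hfin : (E-2)*t ≤ E - p := by
      have hpos : 0 < ((p-1)+L)*p := mul_pos hPL hp0
      have c1 : (E-2)*t*(((p-1)+L)*p) ≤ (E-p)*(((p-1)+L)*p) := by
        nlinarith [mul_le_mul_of_nonneg_right step1 (le_of_lt hp0), step2]
      nlinarith [c1, hpos]
    linarith


/-- Convergence of the hierarchical partial sums in `B` with the precise bound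
`‖x‖_B ≤ (β 2^p / p) ‖f‖_{L^p}`, for scales `λ_{j+1} = λ₁ 2^{(p−1)j}`,
`λ₁ = β/‖f‖_{L^p}^{p−1}`, under the apriori dual estimate
`‖r_j‖_{L^p}^{p−1} ≤ β/(p λ_j)` for `j ≥ 1`. -/
theorem stmt_7
    {B Ω : Type*} [NormedAddCommGroup B] [NormedSpace ℝ B] [CompleteSpace B]
    [MeasurableSpace Ω] (μ : Measure Ω)
    (p : ℝ) (hp : 1 < p) (β : ℝ) (hβ : 0 < β)
    (T : B →ₗ[ℝ] Ω → ℝ)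
    (f : Ω → ℝ) (hf : MemLp f (ENNReal.ofReal p) μ)
    (hfne : (eLpNorm f (ENNReal.ofReal p) μ).toReal ≠ 0)
    (lam : ℕ → ℝ)
    (hlam : ∀ j : ℕ, lam (j + 1)
      = (β / (eLpNorm f (ENNReal.ofReal p) μ).toReal ^ (p - 1)) * 2 ^ ((p - 1) * j))
    (u : ℕ → B) (r : ℕ → Ω → ℝ)
    (hr0 : r 0 = f)
    (hrec : ∀ j, r (j + 1) = fun x => r j x - T (u (j + 1)) x)
    (hmin : ∀ j, ∀ v : B,
      ‖u (j + 1)‖ + lam (j + 1) * (eLpNorm (r (j + 1)) (ENNReal.ofReal p) μ).toReal ^ p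
        ≤ ‖v‖ + lam (j + 1)
            * (eLpNorm (fun x => r j x - T v x) (ENNReal.ofReal p) μ).toReal ^ p)
    (hdual : ∀ j : ℕ, 1 ≤ j →
      (eLpNorm (r j) (ENNReal.ofReal p) μ).toReal ^ (p - 1) ≤ β / (p * lam j)) :
    CauchySeq (fun k => ∑ j ∈ range k, u (j + 1)) ∧
    ∀ x : B, Tendsto (fun k => ∑ j ∈ range k, u (j + 1)) atTop (nhds x) →
      ‖x‖ ≤ (β * 2 ^ p / p) * (eLpNorm f (ENNReal.ofReal p) μ).toReal := by
  have hp0 : (0:ℝ) < p := by linarith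
  have hp1 : (0:ℝ) < p - 1 := by linarith
  set F := (eLpNorm f (ENNReal.ofReal p) μ).toReal with hFdef
  have hF : 0 < F := lt_of_le_of_ne ENNReal.toReal_nonneg (Ne.symm hfne)
  set Np : ℕ → ℝ := fun j => (eLpNorm (r j) (ENNReal.ofReal p) μ).toReal with hNpdef
  have hNp : ∀ j, 0 ≤ Np j := fun j => ENNReal.toReal_nonneg
  have hNp0 : Np 0 = F := by rw [hNpdef]; simp [hr0]; exact hFdef.symm
  set t := p ^ (-(1/(p-1))) with ht
  have ht0 : 0 < t := Real.rpow_pos_of_pos hp0 _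
  have ht1 : t ≤ 1 := Real.rpow_le_one_of_one_le_of_nonpos (by linarith)
    (neg_nonpos.mpr (by positivity))
  -- basic facts about lam
  have hlampos : ∀ m : ℕ, 0 < lam (m+1) := by
    intro m
    rw [hlam m]
    exact mul_pos (div_pos hβ (Real.rpow_pos_of_pos hF _)) (Real.rpow_pos_of_pos two_pos _)
  have hlamsucc : ∀ m : ℕ, lam (m+1+1) = 2^(p-1) * lam (m+1) := by
    intro m
    rw [hlam (m+1), hlam m]
    push_cast
    rw [show (p-1)*((m:ℝ)+1) = (p-1)*(m:ℝ) + (p-1) by ring,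
      Real.rpow_add (by norm_num : (0:ℝ) < 2)]
    ring
  have hlam1 : lam 1 = β / F^(p-1) := by
    have h := hlam 0
    simpa using h
  -- key minimality consequence
  have key : ∀ j : ℕ, ‖u (j+1)‖ + lam (j+1) * Np (j+1) ^ p ≤ lam (j+1) * Np j ^ p := by
    intro j
    have h := hmin j 0
    simpa using h
  -- base value
  have hbase : lam 1 * Np 0 ^ p = β * F := by
    rw [hlam1, hNp0]
    have hFp : F ^ p = F^(p-1) * F := by
      rw [← Real.rpow_add_one hF.ne' (p-1)]
      congr 1
      ring
    rw [hFp]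
    field_simp
  -- dual estimate in explicit form
  have hNple : ∀ m : ℕ, Np (m+1) ≤ F * (t * (1/2:ℝ)^m) := by
    intro m
    have hd := hdual (m+1) (Nat.le_add_left 1 m)
    have e1 : β / (p * lam (m+1)) = F^(p-1) * ((p:ℝ)⁻¹ * (((2:ℝ)^((p-1)*(m:ℝ)))⁻¹)) := by
      rw [hlam m]
      rw [div_eq_iff (by positivity)]
      field_simp
    have e2a : (F^(p-1) : ℝ) ^ ((1:ℝ)/(p-1)) = F := by
      rw [← Real.rpow_mul hF.le, mul_one_div, div_self hp1.ne', Real.rpow_one]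
    have e2b : ((p:ℝ)⁻¹) ^ ((1:ℝ)/(p-1)) = t := by
      rw [← Real.rpow_neg_one p, ← Real.rpow_mul hp0.le]
      rw [ht]
      congr 1
      ring
    have e2c : (((2:ℝ)^((p-1)*(m:ℝ)))⁻¹) ^ ((1:ℝ)/(p-1)) = (1/2:ℝ)^m := by
      rw [← Real.rpow_neg (by norm_num : (0:ℝ) ≤ 2), ← Real.rpow_mul (by norm_num : (0:ℝ) ≤ 2)]
      rw [show -((p-1)*(m:ℝ)) * (1/(p-1)) = -(m:ℝ) by field_simp]
      rw [Real.rpow_neg (by norm_num : (0:ℝ) ≤ 2), Real.rpow_natCast, one_div, inv_pow]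
    calc Np (m+1) = (Np (m+1) ^ (p-1)) ^ ((1:ℝ)/(p-1)) := by
          rw [← Real.rpow_mul (hNp _), mul_one_div, div_self hp1.ne', Real.rpow_one]
      _ ≤ (β / (p * lam (m+1))) ^ ((1:ℝ)/(p-1)) :=
          Real.rpow_le_rpow (Real.rpow_nonneg (hNp _) _) hd (by positivity)
      _ = F * (t * (1/2:ℝ)^m) := by
          rw [e1, Real.mul_rpow (by positivity) (by positivity),
            Real.mul_rpow (by positivity) (by positivity), e2a, e2b, e2c]
  -- weighted estimate
  have hkey2 : ∀ m : ℕ, lam (m+1) * Np (m+1) ^ p ≤ β/p * (F * (t * (1/2:ℝ)^m)) := by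
    intro m
    have hlp : 0 < lam (m+1) := hlampos m
    have hrhs : (0:ℝ) ≤ β/p * (F * (t * (1/2:ℝ)^m)) := by positivity
    rcases eq_or_lt_of_le (hNp (m+1)) with h0 | h0
    · rw [← h0, Real.zero_rpow hp0.ne', mul_zero]
      exact hrhs
    · have hsplit : Np (m+1) ^ p = Np (m+1) ^ (p-1) * Np (m+1) := by
        rw [← Real.rpow_add_one h0.ne' (p-1)]
        congr 1
        ring
      have hd := hdual (m+1) (Nat.le_add_left 1 m)
      calc lam (m+1) * Np (m+1)^p = lam (m+1) * Np (m+1)^(p-1) * Np (m+1) := by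
            rw [hsplit]; ring
        _ ≤ lam (m+1) * (β/(p*lam (m+1))) * Np (m+1) := by
            apply mul_le_mul_of_nonneg_right _ (hNp _)
            exact mul_le_mul_of_nonneg_left hd hlp.le
        _ = β/p * Np (m+1) := by
            field_simp
        _ ≤ β/p * (F * (t * (1/2:ℝ)^m)) :=
            mul_le_mul_of_nonneg_left (hNple m) (by positivity)
  -- geometric norm bound on u
  have h21 : (1:ℝ) ≤ 2^(p-1) := by
    have h := (Real.rpow_le_rpow_left_iff (by norm_num : (1:ℝ) < 2)).mpr (le_of_lt hp1)
    simpa using h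
  have h2p : (2:ℝ)^p = 2 * 2^(p-1) := by
    have h := Real.rpow_add (show (0:ℝ) < 2 by norm_num) 1 (p-1)
    rw [show (1:ℝ) + (p-1) = p by ring, Real.rpow_one] at h
    exact h
  have hbound : ∀ j : ℕ, ‖u (j+1)‖ ≤ (β*F + 2^p*(β/p*F)) * (1/2:ℝ)^j := by
    intro j
    cases j with
    | zero =>
      simp only [pow_zero, mul_one]
      have h1 := key 0
      have h3 : (0:ℝ) ≤ lam 1 * Np 1 ^ p :=
        mul_nonneg (hlampos 0).le (Real.rpow_nonneg (hNp _) _)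
      have h4 : (0:ℝ) ≤ 2^p*(β/p*F) := by positivity
      rw [hbase] at h1
      linarith
    | succ m =>
      have h1 := key (m+1)
      have h2 : lam (m+1+1) * Np (m+1)^p = 2^(p-1) * (lam (m+1) * Np (m+1)^p) := by
        rw [hlamsucc m]; ring
      have h3 := hkey2 m
      have h4 : (0:ℝ) ≤ lam (m+1+1) * Np (m+1+1)^p :=
        mul_nonneg (hlampos (m+1)).le (Real.rpow_nonneg (hNp _) _)
      have h5 : ‖u (m+1+1)‖ ≤ 2^(p-1) * (β/p * (F * (t * (1/2:ℝ)^m))) := by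
        have h6 := mul_le_mul_of_nonneg_left h3
          (le_of_lt (Real.rpow_pos_of_pos two_pos (p-1)))
        rw [h2] at h1
        linarith
      have h7 : 2^(p-1) * (β/p * (F * (t * (1/2:ℝ)^m))) ≤ 2^p*(β/p*F) * (1/2:ℝ)^(m+1) := by
      -- uses t ≤ 1 and 2^p = 2*2^(p-1)
        rw [h2p, pow_succ]
        have hA : (0:ℝ) ≤ 2^(p-1) * (β/p * F) * (1/2:ℝ)^m := by positivity
        nlinarith [mul_le_mul_of_nonneg_left ht1 hA]
      have h8 : (0:ℝ) ≤ β*F*(1/2:ℝ)^(m+1) := by positivity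
      calc ‖u (m+1+1)‖ ≤ 2^p*(β/p*F) * (1/2:ℝ)^(m+1) := h5.trans h7
        _ ≤ (β*F + 2^p*(β/p*F)) * (1/2:ℝ)^(m+1) := by nlinarith
  -- summability and convergence
  have hgeom : Summable (fun j : ℕ => (β*F + 2^p*(β/p*F)) * (1/2:ℝ)^j) :=
    (summable_geometric_of_lt_one (by norm_num) (by norm_num)).mul_left _
  have hsum : Summable (fun j : ℕ => u (j+1)) :=
    Summable.of_norm_bounded hgeom hbound
  have htend := hsum.hasSum.tendsto_sum_nat
  -- partial sums bound via telescoping induction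
  set D := (2^(p-1) - 1) * (β/p * (F * t)) with hD
  have hDnn : 0 ≤ D := by
    have h : (0:ℝ) ≤ β/p * (F*t) := by positivity
    have := mul_le_mul_of_nonneg_right (by linarith : (0:ℝ) ≤ 2^(p-1) - 1) h
    nlinarith
  have hmain : ∀ k : ℕ, (∑ j ∈ range (k+1), ‖u (j+1)‖) + lam (k+1) * Np (k+1)^p
      ≤ β * F + ∑ m ∈ range k, D * (1/2:ℝ)^m := by
    intro k
    induction k with
    | zero =>
      have h1 := key 0
      rw [hbase] at h1
      simpa using h1
    | succ k ih =>
      rw [show (∑ j ∈ range (k+1+1), ‖u (j+1)‖)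
            = (∑ j ∈ range (k+1), ‖u (j+1)‖) + ‖u (k+1+1)‖ from sum_range_succ _ _,
        show (∑ m ∈ range (k+1), D*(1/2:ℝ)^m)
            = (∑ m ∈ range k, D*(1/2:ℝ)^m) + D*(1/2:ℝ)^k from sum_range_succ _ _]
      have h1 := key (k+1)
      have h2 : lam (k+1+1) * Np (k+1)^p
          = lam (k+1)*Np (k+1)^p + (2^(p-1)-1) * (lam (k+1) * Np (k+1)^p) := by
        rw [hlamsucc k]; ring
      have h3 : (2^(p-1)-1) * (lam (k+1) * Np (k+1)^p) ≤ D * (1/2:ℝ)^k := by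
        calc (2^(p-1)-1) * (lam (k+1)*Np (k+1)^p)
            ≤ (2^(p-1)-1) * (β/p * (F * (t * (1/2:ℝ)^k))) :=
              mul_le_mul_of_nonneg_left (hkey2 k) (by linarith)
          _ = D * (1/2:ℝ)^k := by rw [hD]; ring
      linarith
  have hSb : ∀ k : ℕ, (∑ j ∈ range k, ‖u (j+1)‖) ≤ β*F + 2*D := by
    intro k
    have h1 : (∑ j ∈ range k, ‖u (j+1)‖) ≤ ∑ j ∈ range (k+1), ‖u (j+1)‖ := by
      rw [sum_range_succ]
      exact le_add_of_nonneg_right (norm_nonneg _)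
    have h2 := hmain k
    have h3 : (0:ℝ) ≤ lam (k+1) * Np (k+1)^p :=
      mul_nonneg (hlampos k).le (Real.rpow_nonneg (hNp _) _)
    have h4 : ∑ m ∈ range k, D * (1/2:ℝ)^m ≤ 2*D := by
      calc ∑ m ∈ range k, D * (1/2:ℝ)^m = D * ∑ m ∈ range k, (1/2:ℝ)^m := by rw [mul_sum]
        _ ≤ D * 2 := mul_le_mul_of_nonneg_left (sum_geometric_two_le k) hDnn
        _ = 2*D := by ring
    linarith
  -- final constant comparison
  have hM : β*F + 2*D ≤ (β * 2^p / p) * F := by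
    have hstar := aux_star p hp
    rw [← ht] at hstar
    have hbfp : 0 < β * F / p := by positivity
    have heq : β*F + 2*D = β*F/p * (p + ((2:ℝ)^p - 2)*t) := by
      rw [hD, h2p]
      field_simp
    rw [heq]
    calc β*F/p * (p + ((2:ℝ)^p - 2)*t) ≤ β*F/p * 2^p :=
        mul_le_mul_of_nonneg_left hstar hbfp.le
      _ = (β * 2^p / p) * F := by ring
  refine ⟨htend.cauchySeq, ?_⟩
  intro x hx
  refine le_of_tendsto' hx.norm ?_
  intro k
  calc ‖∑ j ∈ range k, u (j+1)‖ ≤ ∑ j ∈ range k, ‖u (j+1)‖ := norm_sum_le _ _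
    _ ≤ β*F + 2*D := hSb k
    _ ≤ (β * 2^p/p) * F := hM
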